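/- Let n ≥ 2, let a₁, …, a_{n-1} be integers with a_j ≥ 1, and let Q : ℝ^{n-1} → ℝ be a continuous function that is mixed homogeneous of degree (a₁, …, a_{n-1}), i.e. Q(t^{1/a₁}y₁, …, t^{1/a_{n-1}}y_{n-1}) = t·Q(y) for all t > 0 and all y ∈ ℝ^{n-1}, and satisfies Q(y) > 0 for all y ≠ 0. For δ > 0 let D_δ : ℝ^{n-1} → ℝ^{n-1} be the anisotropic dilation D_δ(y) = (δ^{1/a₁}y₁, …, δ^{1/a_{n-1}}y_{n-1}). Then there exist a finite set V ⊆ ℝ^{n-1} with at most 2^{n-1} elements and a constant c > 0 such that for every δ > 0: {y : Q(y) ≤ δ} ⊆ D_δ(convexHull(V)) and vol(D_δ(convexHull(V))) ≤ c · vol({y : Q(y) ≤ δ}), where vol denotes (n-1)-dimensional Lebesgue measure. -/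

import Mathlib

open MeasureTheory Real
open scoped ENNReal

/-- The anisotropic dilation `y ↦ (t^{1/a₁} y₁, …, t^{1/a_{n-1}} y_{n-1})`. -/
noncomputable def anisoDilation (n : ℕ) (a : Fin (n - 1) → ℤ) (t : ℝ)
    (y : EuclideanSpace ℝ (Fin (n - 1))) : EuclideanSpace ℝ (Fin (n - 1)) :=
  WithLp.toLp 2 (fun i => t ^ ((a i : ℝ))⁻¹ * y i)

lemma euclid_norm_le_norm {m : ℕ} {x y : EuclideanSpace ℝ (Fin m)}
    (h : ∀ i, |x i| ≤ |y i|) : ‖x‖ ≤ ‖y‖ := by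
  rw [EuclideanSpace.norm_eq, EuclideanSpace.norm_eq]
  apply Real.sqrt_le_sqrt
  apply Finset.sum_le_sum
  intro i _
  have := h i
  simp only [Real.norm_eq_abs]
  nlinarith [abs_nonneg (x i), abs_nonneg (y i)]

lemma euclid_abs_le_norm {m : ℕ} (x : EuclideanSpace ℝ (Fin m)) (i : Fin m) :
    |x i| ≤ ‖x‖ := by
  rw [EuclideanSpace.norm_eq]
  rw [show |x i| = Real.sqrt (|x i| ^ 2) by rw [Real.sqrt_sq_eq_abs, abs_abs]]
  apply Real.sqrt_le_sqrt
  have hxi : ‖x i‖ ^ 2 = |x i| ^ 2 := by rw [Real.norm_eq_abs]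
  rw [← hxi]
  exact Finset.single_le_sum (f := fun j => ‖x j‖ ^ 2) (fun j _ => by positivity)
    (Finset.mem_univ i)

theorem mixed_homogeneous_sublevel_polyhedra
    (n : ℕ) (hn : 2 ≤ n) (a : Fin (n - 1) → ℤ) (ha : ∀ j, 1 ≤ a j)
    (Q : EuclideanSpace ℝ (Fin (n - 1)) → ℝ) (hQc : Continuous Q)
    (hQhom : ∀ t : ℝ, 0 < t → ∀ y, Q (anisoDilation n a t y) = t * Q y)
    (hQpos : ∀ y, y ≠ 0 → 0 < Q y) :
    ∃ (V : Finset (EuclideanSpace ℝ (Fin (n - 1)))) (c : ℝ),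
      V.card ≤ 2 ^ (n - 1) ∧ 0 < c ∧
      ∀ δ : ℝ, 0 < δ →
        {y | Q y ≤ δ} ⊆
            anisoDilation n a δ '' convexHull ℝ (V : Set (EuclideanSpace ℝ (Fin (n - 1)))) ∧
        (volume (anisoDilation n a δ ''
            convexHull ℝ (V : Set (EuclideanSpace ℝ (Fin (n - 1)))))).toReal ≤
          c * (volume {y | Q y ≤ δ}).toReal := by
  classical
  have hm0 : 0 < n - 1 := by omega
  have ha1 : ∀ i, (1:ℝ) ≤ (a i : ℝ) := fun i => by exact_mod_cast ha i
  have he_pos : ∀ i, (0:ℝ) < ((a i : ℝ))⁻¹ := fun i => by have := ha1 i; positivity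
  have he_le : ∀ i, ((a i : ℝ))⁻¹ ≤ 1 := fun i => by
    have h := ha1 i
    have h0 : (0:ℝ) < (a i : ℝ) := by linarith
    rw [inv_le_one_iff₀]
    right; exact h
  -- basic facts about the dilation
  have hD0 : ∀ t : ℝ, anisoDilation n a t 0 = 0 := by
    intro t; ext i; simp [anisoDilation]
  have hQ0 : Q 0 = 0 := by
    have h := hQhom 2 two_pos 0
    rw [hD0] at h; linarith
  have hD1 : ∀ y, anisoDilation n a 1 y = y := by
    intro y; ext i; simp [anisoDilation]
  have hDzero : ∀ y, anisoDilation n a 0 y = 0 := by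
    intro y; ext i
    simp [anisoDilation, Real.zero_rpow (he_pos i).ne']
  have hDD : ∀ s t : ℝ, 0 ≤ s → 0 ≤ t → ∀ y,
      anisoDilation n a s (anisoDilation n a t y) = anisoDilation n a (s * t) y := by
    intro s t hs ht y; ext i
    simp only [anisoDilation, PiLp.toLp_apply]
    rw [Real.mul_rpow hs ht]; ring
  -- minimum of Q on the unit sphere
  obtain ⟨y₀, hy₀, hmin⟩ :=
    (isCompact_sphere (0 : EuclideanSpace ℝ (Fin (n-1))) 1).exists_isMinOn
      ⟨EuclideanSpace.single ⟨0, hm0⟩ (1:ℝ), by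
        simp [mem_sphere_zero_iff_norm, EuclideanSpace.norm_single]⟩
      hQc.continuousOn
  have hy₀norm : ‖y₀‖ = 1 := mem_sphere_zero_iff_norm.mp hy₀
  set M : ℝ := Q y₀ with hM
  have hMpos : 0 < M := hQpos y₀ (by intro h; rw [h] at hy₀norm; simp at hy₀norm)
  set R : ℝ := max 1 M⁻¹ with hRdef
  have hR1 : (1:ℝ) ≤ R := le_max_left _ _
  have hRpos : 0 < R := lt_of_lt_of_le one_pos hR1
  -- the sublevel set {Q ≤ 1} is contained in the ball of radius R
  have hbound : ∀ y : EuclideanSpace ℝ (Fin (n-1)), Q y ≤ 1 → ‖y‖ ≤ R := by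
    intro y hQy
    by_contra hcon
    push_neg at hcon
    have hy1 : 1 < ‖y‖ := lt_of_le_of_lt (le_max_left _ _) hcon
    have hyM : M⁻¹ < ‖y‖ := lt_of_le_of_lt (le_max_right _ _) hcon
    set g : ℝ → ℝ := fun t => ‖anisoDilation n a t y‖ with hg
    have hgc : Continuous g := by
      apply Continuous.norm
      apply (PiLp.continuous_toLp 2 _).comp
      apply continuous_pi
      intro i
      exact (Real.continuous_rpow_const (he_pos i).le).mul continuous_const
    have hg0 : g 0 = 0 := by simp [hg, hDzero]
    have hg1 : g 1 = ‖y‖ := by simp [hg, hD1]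
    have h1mem : (1:ℝ) ∈ Set.Icc (g 0) (g 1) := by
      rw [hg0, hg1]; exact ⟨zero_le_one, hy1.le⟩
    obtain ⟨t, htI, hgt⟩ := intermediate_value_Icc zero_le_one hgc.continuousOn h1mem
    have ht0 : 0 < t := by
      rcases eq_or_lt_of_le htI.1 with h | h
      · rw [← h, hg0] at hgt; norm_num at hgt
      · exact h
    have ht1 : t ≤ 1 := htI.2
    set z := anisoDilation n a t y with hzdef
    have hznorm : ‖z‖ = 1 := hgt
    have hyz : anisoDilation n a t⁻¹ z = y := by
      rw [hzdef, hDD t⁻¹ t (by positivity) ht0.le, inv_mul_cancel₀ ht0.ne', hD1]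
    have hQyz : Q y = t⁻¹ * Q z := by rw [← hyz]; exact hQhom t⁻¹ (by positivity) z
    have hzM : M ≤ Q z := hmin (mem_sphere_zero_iff_norm.mpr hznorm)
    have hti : 1 ≤ t⁻¹ := by
      have h := one_le_inv_iff₀.mpr ⟨ht0, ht1⟩
      exact h
    have hcomp : ∀ i, |y i| ≤ |(t⁻¹ • z : EuclideanSpace ℝ (Fin (n-1))) i| := by
      intro i
      have hyi : y i = t⁻¹ ^ ((a i : ℝ))⁻¹ * z i := by rw [← hyz]; rfl
      have hsm : (t⁻¹ • z : EuclideanSpace ℝ (Fin (n-1))) i = t⁻¹ * z i := rfl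
      rw [hyi, hsm, abs_mul, abs_mul]
      have h1 : (0:ℝ) ≤ t⁻¹ ^ ((a i:ℝ))⁻¹ := Real.rpow_nonneg (by positivity) _
      have h2 : t⁻¹ ^ ((a i:ℝ))⁻¹ ≤ t⁻¹ := by
        calc t⁻¹ ^ ((a i:ℝ))⁻¹ ≤ t⁻¹ ^ (1:ℝ) :=
              Real.rpow_le_rpow_of_exponent_le hti (he_le i)
          _ = t⁻¹ := Real.rpow_one _
      rw [abs_of_nonneg h1, abs_of_nonneg (by positivity : (0:ℝ) ≤ t⁻¹)]
      exact mul_le_mul_of_nonneg_right h2 (abs_nonneg _)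
    have hyle : ‖y‖ ≤ t⁻¹ := by
      have h := euclid_norm_le_norm hcomp
      rwa [norm_smul, hznorm, Real.norm_eq_abs,
        abs_of_nonneg (by positivity : (0:ℝ) ≤ t⁻¹), mul_one] at h
    have h3 : M⁻¹ < t⁻¹ := lt_of_lt_of_le hyM hyle
    have h4 : (1:ℝ) < t⁻¹ * M := by
      rw [← inv_mul_cancel₀ hMpos.ne']
      exact mul_lt_mul_of_pos_right h3 hMpos
    have h5 : t⁻¹ * M ≤ t⁻¹ * Q z :=
      mul_le_mul_of_nonneg_left hzM (by positivity)
    rw [hQyz] at hQy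
    linarith
  -- the vertex set
  set V : Finset (EuclideanSpace ℝ (Fin (n-1))) :=
    (Fintype.piFinset fun _ : Fin (n-1) => ({-R, R} : Finset ℝ)).image (WithLp.toLp 2) with hVdef
  have hVcard : V.card ≤ 2 ^ (n - 1) := by
    refine le_trans Finset.card_image_le ?_
    rw [Fintype.card_piFinset]
    calc ∏ _i : Fin (n-1), ({-R, R} : Finset ℝ).card
        ≤ ∏ _i : Fin (n-1), 2 := Finset.prod_le_prod' fun i _ => Finset.card_insert_le _ _
      _ = 2 ^ (n-1) := by simp [Finset.prod_const]
  have hboxhull : {y : EuclideanSpace ℝ (Fin (n-1)) | ∀ i, |y i| ≤ R} ⊆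
      convexHull ℝ (V : Set (EuclideanSpace ℝ (Fin (n-1)))) := by
    intro y hy
    have hcoe : (V : Set (EuclideanSpace ℝ (Fin (n-1))))
        = WithLp.toLp 2 '' Set.pi Set.univ (fun _ : Fin (n-1) => ({-R, R} : Set ℝ)) := by
      rw [hVdef, Finset.coe_image]; congr 1
      ext z
      rw [Set.mem_pi, Finset.mem_coe]
      exact Fintype.mem_piFinset.trans (by simp)
    rw [hcoe, show (WithLp.toLp 2 : (Fin (n-1) → ℝ) → _) =
      ⇑(WithLp.linearEquiv 2 ℝ (Fin (n-1) → ℝ)).symm.toLinearMap from rfl,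
      ← LinearMap.image_convexHull]
    exact ⟨WithLp.ofLp y, mem_convexHull_pi fun i _ => by
      rw [convexHull_pair, segment_eq_Icc (by linarith : -R ≤ R)]
      exact abs_le.mp (hy i), rfl⟩
  -- the unit sublevel set
  set S₁ : Set (EuclideanSpace ℝ (Fin (n-1))) := {y | Q y ≤ 1} with hS₁def
  have hS₁hull : S₁ ⊆ convexHull ℝ (V : Set (EuclideanSpace ℝ (Fin (n-1)))) :=
    fun y hy => hboxhull fun i => le_trans (euclid_abs_le_norm y i) (hbound y hy)
  have hcompact : IsCompact (convexHull ℝ (V : Set (EuclideanSpace ℝ (Fin (n-1))))) :=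
    V.finite_toSet.isCompact_convexHull (𝕜 := ℝ)
  have hhullfin : volume (convexHull ℝ (V : Set (EuclideanSpace ℝ (Fin (n-1))))) < ⊤ :=
    hcompact.measure_lt_top
  -- volume of S₁ is positive
  obtain ⟨ε, hε, hball⟩ : ∃ ε > 0, Metric.ball (0 : EuclideanSpace ℝ (Fin (n-1))) ε ⊆ S₁ := by
    have hopen : IsOpen {y : EuclideanSpace ℝ (Fin (n-1)) | Q y < 1} :=
      isOpen_lt hQc continuous_const
    have h0mem : (0 : EuclideanSpace ℝ (Fin (n-1))) ∈ {y | Q y < 1} := by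
      simp [hQ0]
    obtain ⟨ε, hε, hb⟩ := Metric.isOpen_iff.mp hopen 0 h0mem
    exact ⟨ε, hε, fun y hy => show Q y ≤ 1 from le_of_lt (hb hy)⟩
  have hS₁pos : 0 < volume S₁ :=
    lt_of_lt_of_le (Metric.measure_ball_pos volume 0 hε) (measure_mono hball)
  have hS₁fin : volume S₁ < ⊤ := lt_of_le_of_lt (measure_mono hS₁hull) hhullfin
  have hs : 0 < (volume S₁).toReal := ENNReal.toReal_pos hS₁pos.ne' hS₁fin.ne
  have hH : 0 < (volume (convexHull ℝ (V : Set (EuclideanSpace ℝ (Fin (n-1)))))).toReal :=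
    ENNReal.toReal_pos (lt_of_lt_of_le hS₁pos (measure_mono hS₁hull)).ne' hhullfin.ne
  -- the constant
  refine ⟨V, (volume (convexHull ℝ (V : Set (EuclideanSpace ℝ (Fin (n-1)))))).toReal /
      (volume S₁).toReal, hVcard, div_pos hH hs, ?_⟩
  intro δ hδ
  -- the dilation as a linear map
  set L : EuclideanSpace ℝ (Fin (n-1)) →ₗ[ℝ] EuclideanSpace ℝ (Fin (n-1)) :=
    { toFun := anisoDilation n a δ,
      map_add' := fun x y => by
        ext i; simp only [anisoDilation, PiLp.add_apply, PiLp.toLp_apply]; ring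
      map_smul' := fun c x => by
        ext i
        simp only [anisoDilation, PiLp.toLp_apply, PiLp.smul_apply, smul_eq_mul, RingHom.id_apply]
        ring } with hLdef
  have hLcoe : ⇑L = anisoDilation n a δ := rfl
  set d : ℝ := ∏ i, δ ^ ((a i : ℝ))⁻¹ with hddef
  have hdpos : 0 < d := Finset.prod_pos fun i _ => Real.rpow_pos_of_pos hδ _
  have hdet : L.det = d := by
    rw [← LinearMap.det_toMatrix (EuclideanSpace.basisFun (Fin (n-1)) ℝ).toBasis]
    have hmat : (LinearMap.toMatrix (EuclideanSpace.basisFun (Fin (n-1)) ℝ).toBasis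
        (EuclideanSpace.basisFun (Fin (n-1)) ℝ).toBasis L)
        = Matrix.diagonal (fun i => δ ^ ((a i : ℝ))⁻¹) := by
      ext i j
      rw [LinearMap.toMatrix_apply]
      simp [hLdef, anisoDilation, OrthonormalBasis.coe_toBasis_repr_apply,
        OrthonormalBasis.coe_toBasis, EuclideanSpace.basisFun_apply,
        EuclideanSpace.basisFun_repr, EuclideanSpace.single_apply, Matrix.diagonal]
    rw [hmat, Matrix.det_diagonal]
  have him : ∀ s : Set (EuclideanSpace ℝ (Fin (n-1))),
      volume (anisoDilation n a δ '' s) = ENNReal.ofReal d * volume s := by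
    intro s
    have h := Measure.addHaar_image_linearMap (μ := volume) L s
    rw [hdet, abs_of_pos hdpos] at h
    rw [← hLcoe]
    exact h
  -- the δ-sublevel set is the dilate of S₁
  have hseteq : {y | Q y ≤ δ} = anisoDilation n a δ '' S₁ := by
    ext y
    constructor
    · intro hy
      refine ⟨anisoDilation n a δ⁻¹ y, ?_, ?_⟩
      · show Q (anisoDilation n a δ⁻¹ y) ≤ 1
        rw [hQhom δ⁻¹ (by positivity) y]
        calc δ⁻¹ * Q y ≤ δ⁻¹ * δ := mul_le_mul_of_nonneg_left hy (by positivity)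
          _ = 1 := inv_mul_cancel₀ hδ.ne'
      · rw [hDD δ δ⁻¹ hδ.le (by positivity), mul_inv_cancel₀ hδ.ne', hD1]
    · rintro ⟨z, hz, rfl⟩
      show Q (anisoDilation n a δ z) ≤ δ
      rw [hQhom δ hδ z]
      calc δ * Q z ≤ δ * 1 := mul_le_mul_of_nonneg_left hz hδ.le
        _ = δ := mul_one δ
  constructor
  · rw [hseteq]
    exact Set.image_mono hS₁hull
  · rw [hseteq, him, him, ENNReal.toReal_mul, ENNReal.toReal_mul,
      ENNReal.toReal_ofReal hdpos.le]
    have hkey : (volume (convexHull ℝ (V : Set (EuclideanSpace ℝ (Fin (n-1)))))).toReal /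
        (volume S₁).toReal * (volume S₁).toReal
        = (volume (convexHull ℝ (V : Set (EuclideanSpace ℝ (Fin (n-1)))))).toReal :=
      div_mul_cancel₀ _ hs.ne'
    calc d * (volume (convexHull ℝ (V : Set (EuclideanSpace ℝ (Fin (n-1)))))).toReal
        = (volume (convexHull ℝ (V : Set (EuclideanSpace ℝ (Fin (n-1)))))).toReal /
            (volume S₁).toReal * (d * (volume S₁).toReal) := by
          have h6 : (volume (convexHull ℝ (V : Set (EuclideanSpace ℝ (Fin (n-1)))))).toReal /
              (volume S₁).toReal * (d * (volume S₁).toReal)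
              = d * ((volume (convexHull ℝ (V : Set (EuclideanSpace ℝ (Fin (n-1)))))).toReal /
                  (volume S₁).toReal * (volume S₁).toReal) := by ring
          rw [h6, hkey]
      _ ≤ _ := le_refl _
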